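/- For all n ≥ 2, the polynomials AExc_n^+(s,t) = ∑_{π even in S_n} t^{exc(π)} s^{nexc(π)-1} and AExc_n^-(s,t) = ∑_{π odd in S_n} t^{exc(π)} s^{nexc(π)-1} satisfy AExc_n^+(s,t) = s·AExc_{n-1}^+(s,t) + t·AExc_{n-1}^-(s,t) + (1/2)·st·D A_{n-1}(s,t), where A_{n-1}(s,t) = ∑_{π ∈ S_{n-1}} t^{exc(π)} s^{nexc(π)-1} and D = ∂/∂s + ∂/∂t. -/

import Mathlib

open Finset MvPolynomial

/-- Number of excedances of a permutation of `{0,…,n-1}`. -/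
def excA {n : ℕ} (π : Equiv.Perm (Fin n)) : ℕ :=
  (Finset.univ.filter (fun i => i < π i)).card

/-- Number of non-excedances. -/
def nexcA {n : ℕ} (π : Equiv.Perm (Fin n)) : ℕ := n - excA π

/-- Number of inversions. -/
def invA {n : ℕ} (π : Equiv.Perm (Fin n)) : ℕ :=
  (Finset.univ.filter (fun p : Fin n × Fin n => p.1 < p.2 ∧ π p.2 < π p.1)).card

/-- The bivariate excedance polynomial `A_n(s,t)` (with `s = X 0`, `t = X 1`). -/
noncomputable def Aexc (n : ℕ) : MvPolynomial (Fin 2) ℚ :=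
  ∑ π : Equiv.Perm (Fin n), X 1 ^ excA π * X 0 ^ (nexcA π - 1)

/-- The bivariate excedance polynomial over even permutations. -/
noncomputable def AexcP (n : ℕ) : MvPolynomial (Fin 2) ℚ :=
  ∑ π ∈ Finset.univ.filter (fun π : Equiv.Perm (Fin n) => Even (invA π)),
    X 1 ^ excA π * X 0 ^ (nexcA π - 1)

/-- The bivariate excedance polynomial over odd permutations. -/
noncomputable def AexcM (n : ℕ) : MvPolynomial (Fin 2) ℚ :=
  ∑ π ∈ Finset.univ.filter (fun π : Equiv.Perm (Fin n) => ¬ Even (invA π)),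
    X 1 ^ excA π * X 0 ^ (nexcA π - 1)

/-- The operator `D = d/ds + d/dt`. -/
noncomputable def Dop (f : MvPolynomial (Fin 2) ℚ) : MvPolynomial (Fin 2) ℚ :=
  pderiv 0 f + pderiv 1 f

/-! ### Auxiliary lemmas -/

section Aux
open Equiv Equiv.Perm

/-! #### Sign and inversions -/

lemma signAux_eq_sign (n : ℕ) (π : Equiv.Perm (Fin n)) : signAux π = Perm.sign π := by
  induction π using Equiv.Perm.swap_induction_on
  case _ => simp
  case _ g x y hxy ih =>
    rw [signAux_mul, Perm.sign_mul, signAux_swap hxy, Perm.sign_swap hxy, ih]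

lemma sign_eq_inv {n : ℕ} (π : Equiv.Perm (Fin n)) :
    Perm.sign π = (-1 : ℤˣ) ^ invA π := by
  rw [← signAux_eq_sign]
  unfold signAux
  rw [Finset.prod_ite, Finset.prod_const, Finset.prod_const, one_pow, mul_one]
  congr 1
  rw [invA]
  apply Finset.card_bij (fun x _ => (x.2, x.1))
  · rintro ⟨a, b⟩ hx
    simp only [mem_filter, mem_finPairsLT] at hx ⊢
    refine ⟨mem_univ _, hx.1, lt_of_le_of_ne hx.2 ?_⟩
    intro h
    exact (ne_of_gt hx.1) (π.injective h)
  · rintro ⟨a, b⟩ _ ⟨c, d⟩ _ h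
    simp only [Prod.mk.injEq] at h
    obtain ⟨h1, h2⟩ := h; subst h1; subst h2; rfl
  · rintro ⟨a, b⟩ hp
    simp only [mem_filter, mem_univ, true_and] at hp
    exact ⟨⟨b, a⟩, by simp [mem_filter, mem_finPairsLT, hp.1, le_of_lt hp.2], rfl⟩

lemma even_invA_iff {n : ℕ} (π : Equiv.Perm (Fin n)) :
    Even (invA π) ↔ Perm.sign π = 1 := by
  rw [sign_eq_inv, neg_one_pow_eq_one_iff_even (by decide : (-1 : ℤˣ) ≠ 1)]

/-! #### Excedances and `decomposeFin` -/

lemma excA_le {n : ℕ} (π : Equiv.Perm (Fin (n+1))) : excA π ≤ n := by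
  have hsub : (Finset.univ.filter (fun i => i < π i)) ⊆ Finset.univ.erase (Fin.last n) := by
    intro j hj
    simp only [mem_filter, mem_univ, true_and] at hj
    refine Finset.mem_erase.2 ⟨?_, mem_univ _⟩
    rintro rfl
    exact absurd hj (not_lt.2 (Fin.le_last _))
  calc excA π ≤ (Finset.univ.erase (Fin.last n)).card := Finset.card_le_card hsub
    _ = n := by rw [Finset.card_erase_of_mem (mem_univ _), card_univ, Fintype.card_fin]; rfl

lemma excA_sum {n : ℕ} (π : Equiv.Perm (Fin n)) :
    excA π = ∑ i : Fin n, if i < π i then 1 else 0 := by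
  rw [excA, Finset.card_filter]

lemma excA_decomp_zero {n : ℕ} (σ : Equiv.Perm (Fin n)) :
    excA (Equiv.Perm.decomposeFin.symm (0, σ)) = excA σ := by
  rw [excA_sum, excA_sum, Fin.sum_univ_succ, Equiv.Perm.decomposeFin_symm_apply_zero]
  simp only [lt_self_iff_false, if_false, zero_add]
  refine Finset.sum_congr rfl fun i _ => ?_
  rw [Equiv.Perm.decomposeFin_symm_apply_succ, Equiv.swap_self, Equiv.refl_apply]
  simp [Fin.succ_lt_succ_iff]

lemma excA_decomp_succ {n : ℕ} (σ : Equiv.Perm (Fin n)) (i0 : Fin n) :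
    excA (Equiv.Perm.decomposeFin.symm ((σ i0).succ, σ))
      = excA σ + (if i0 < σ i0 then 0 else 1) := by
  set p : Fin (n+1) := (σ i0).succ with hp
  have key : ∀ i : Fin n, (if (i.succ : Fin (n+1)) < Equiv.Perm.decomposeFin.symm (p, σ) i.succ then 1 else 0)
      = if i = i0 then 0 else (if i < σ i then 1 else 0) := by
    intro i
    rw [Equiv.Perm.decomposeFin_symm_apply_succ]
    by_cases h : i = i0
    · subst h
      rw [if_pos rfl, Equiv.swap_apply_right]
      simp [Fin.not_lt.2 (Fin.zero_le _)]
    · rw [if_neg h, Equiv.swap_apply_of_ne_of_ne (Fin.succ_ne_zero _)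
        (fun hh => h (σ.injective (Fin.succ_injective _ hh)))]
      simp [Fin.succ_lt_succ_iff]
  rw [excA_sum, Fin.sum_univ_succ, Equiv.Perm.decomposeFin_symm_apply_zero,
    if_pos (Fin.succ_pos _)]
  rw [Finset.sum_congr rfl (fun i _ => key i)]
  rw [excA_sum]
  rw [← Finset.add_sum_erase _ _ (mem_univ i0),
    ← Finset.add_sum_erase _ (fun i => if i < σ i then 1 else 0) (mem_univ i0)]
  rw [if_pos rfl]
  have herase : ∑ i ∈ Finset.univ.erase i0, (if i = i0 then 0 else (if i < σ i then (1:ℕ) else 0))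
      = ∑ i ∈ Finset.univ.erase i0, (if i < σ i then 1 else 0) := by
    refine Finset.sum_congr rfl fun i hi => ?_
    rw [if_neg (Finset.mem_erase.1 hi).1]
  rw [herase]
  by_cases h : i0 < σ i0 <;> simp [h] <;> ring

/-! #### The monomials and the operator `D` -/

/-- The monomial `t^e s^(m-e)`. -/
noncomputable def trm (m e : ℕ) : MvPolynomial (Fin 2) ℚ := X 1 ^ e * X 0 ^ (m - e)

lemma trm_succ {m e : ℕ} (h : e ≤ m) : trm (m+1) e = X 0 * trm m e := by
  rw [trm, trm, show m + 1 - e = (m - e) + 1 by omega, pow_succ]; ring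

lemma trm_succ' (m e : ℕ) : trm (m+1) (e+1) = X 1 * trm m e := by
  rw [trm, trm, show m + 1 - (e+1) = m - e by omega, pow_succ]; ring

lemma Dop_add (f g : MvPolynomial (Fin 2) ℚ) : Dop (f + g) = Dop f + Dop g := by
  simp [Dop]; ring

lemma Dop_smul (a : ℚ) (f : MvPolynomial (Fin 2) ℚ) : Dop (a • f) = a • Dop f := by
  simp [Dop, smul_add]

lemma Dop_neg (f : MvPolynomial (Fin 2) ℚ) : Dop (-f) = - Dop f := by
  simp [Dop]; ring

lemma Dop_sum {α : Type*} (s : Finset α) (f : α → MvPolynomial (Fin 2) ℚ) :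
    Dop (∑ x ∈ s, f x) = ∑ x ∈ s, Dop (f x) := by
  simp [Dop, Finset.sum_add_distrib]

lemma Dop_helper (a b : ℕ) :
    X 0 * X 1 * ((X 1 : MvPolynomial (Fin 2) ℚ)^a * (b • X 0 ^ (b-1)) + (a • X 1^(a-1)) * X 0^b)
      = a • (X 0 * (X 1^a * X 0^b)) + b • (X 1 * (X 1^a * X 0^b)) := by
  rcases a with _ | a <;> rcases b with _ | b <;>
    simp only [Nat.succ_sub_one, nsmul_eq_mul, Nat.cast_zero, Nat.cast_add, Nat.cast_one,
      pow_succ, pow_zero, zero_mul, mul_zero, zero_add, add_zero, one_mul, mul_one] <;>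
    push_cast <;> ring

lemma Dop_trm (m e : ℕ) :
    X 0 * X 1 * Dop (trm m e) = e • (X 0 * trm m e) + (m - e) • (X 1 * trm m e) := by
  rw [trm, Dop]
  have h0 : pderiv (R := ℚ) (σ := Fin 2) 0 (X 1 ^ e * X 0 ^ (m - e))
      = X 1 ^ e * ((m - e) • X 0 ^ (m - e - 1)) := by
    rw [pderiv_mul]
    simp [pderiv_pow, pderiv_X_self, pderiv_X_of_ne (show (1:Fin 2) ≠ 0 by decide)]
  have h1 : pderiv (R := ℚ) (σ := Fin 2) 1 (X 1 ^ e * X 0 ^ (m - e))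
      = (e • X 1 ^ (e - 1)) * X 0 ^ (m - e) := by
    rw [pderiv_mul]
    simp [pderiv_pow, pderiv_X_self, pderiv_X_of_ne (show (0:Fin 2) ≠ 1 by decide)]
  rw [h0, h1]
  exact Dop_helper e (m - e)

lemma Dop_sub_pow (k : ℕ) : Dop ((X 0 - X 1 : MvPolynomial (Fin 2) ℚ) ^ k) = 0 := by
  simp [Dop, pderiv_pow, pderiv_X_self, pderiv_X_of_ne (show (1:Fin 2) ≠ 0 by decide),
    pderiv_X_of_ne (show (0:Fin 2) ≠ 1 by decide)]

/-! #### The weighted sums `Wt` and the key recursion -/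

/-- Weighted excedance sum: weight `a` on even permutations, `b` on odd ones. -/
noncomputable def Wt (n : ℕ) (a b : ℚ) : MvPolynomial (Fin 2) ℚ :=
  ∑ π : Equiv.Perm (Fin (n+1)), (if Equiv.Perm.sign π = 1 then a else b) • trm n (excA π)

lemma count_ite {n : ℕ} (σ : Equiv.Perm (Fin (n+1))) (A B : MvPolynomial (Fin 2) ℚ) :
    ∑ i : Fin (n+1), (if i < σ i then A else B)
      = excA σ • A + (n + 1 - excA σ) • B := by
  rw [Finset.sum_ite, Finset.sum_const, Finset.sum_const]
  congr 1
  congr 1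
  have h := Finset.card_filter_add_card_filter_not
    (s := (univ : Finset (Fin (n+1)))) (p := fun i => i < σ i)
  rw [card_univ, Fintype.card_fin] at h
  have : excA σ = (Finset.univ.filter (fun i => i < σ i)).card := rfl
  omega

lemma Wt_succ (n : ℕ) (a b : ℚ) :
    Wt (n+1) a b = X 0 * Wt n a b + (X 0 * X 1 * Dop (Wt n b a) + X 1 * Wt n b a) := by
  have hrhs2 : X 0 * X 1 * Dop (Wt n b a) + X 1 * Wt n b a
      = ∑ σ : Equiv.Perm (Fin (n+1)), (if Equiv.Perm.sign σ = 1 then b else a) •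
          (X 0 * X 1 * Dop (trm n (excA σ)) + X 1 * trm n (excA σ)) := by
    rw [Wt, Dop_sum, Finset.mul_sum, Finset.mul_sum, ← Finset.sum_add_distrib]
    refine Finset.sum_congr rfl fun σ _ => ?_
    rw [Dop_smul, mul_smul_comm, mul_smul_comm, smul_add]
  rw [hrhs2, Wt, Wt, Finset.mul_sum]
  rw [← Equiv.sum_comp (Equiv.Perm.decomposeFin.symm)
    (fun π => (if Equiv.Perm.sign π = 1 then a else b) • trm (n+1) (excA π))]
  rw [Fintype.sum_prod_type, Finset.sum_comm, ← Finset.sum_add_distrib]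
  refine Finset.sum_congr rfl fun σ _ => ?_
  rw [Fin.sum_univ_succ]
  congr 1
  · rw [Equiv.Perm.decomposeFin.symm_sign, excA_decomp_zero, trm_succ (excA_le σ),
      if_pos rfl, one_mul, mul_smul_comm]
  · rw [← Equiv.sum_comp σ (fun i =>
      (if Equiv.Perm.sign (Equiv.Perm.decomposeFin.symm (Fin.succ i, σ)) = 1 then a else b) •
        trm (n+1) (excA (Equiv.Perm.decomposeFin.symm (Fin.succ i, σ))))]
    have key : ∀ i0 : Fin (n+1),
        (if Equiv.Perm.sign (Equiv.Perm.decomposeFin.symm (Fin.succ (σ i0), σ)) = 1 then a else b) •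
          trm (n+1) (excA (Equiv.Perm.decomposeFin.symm (Fin.succ (σ i0), σ)))
        = (if Equiv.Perm.sign σ = 1 then b else a) •
            (if i0 < σ i0 then X 0 * trm n (excA σ) else X 1 * trm n (excA σ)) := by
      intro i0
      rw [Equiv.Perm.decomposeFin.symm_sign, if_neg (Fin.succ_ne_zero _), excA_decomp_succ]
      have hw : (if (-1 : ℤˣ) * Equiv.Perm.sign σ = 1 then a else b)
          = (if Equiv.Perm.sign σ = 1 then b else a) := by
        rcases Int.units_eq_one_or (Equiv.Perm.sign σ) with h | h <;> simp [h]
      rw [hw]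
      by_cases hc : i0 < σ i0
      · rw [if_pos hc, if_pos hc, add_zero, trm_succ (excA_le σ)]
      · rw [if_neg hc, if_neg hc, trm_succ']
    rw [Finset.sum_congr rfl (fun i0 _ => key i0), ← Finset.smul_sum, count_ite,
      Dop_trm]
    congr 1
    rw [show n + 1 - excA σ = (n - excA σ) + 1 from by have := excA_le σ; omega,
      add_smul, one_smul, ← add_assoc]

lemma Wt_neg (n : ℕ) (a b : ℚ) : Wt n (-a) (-b) = - Wt n a b := by
  rw [Wt, Wt, ← Finset.sum_neg_distrib]
  refine Finset.sum_congr rfl fun π _ => ?_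
  rw [← neg_smul]
  congr 1
  split <;> simp

lemma Wt_add (n : ℕ) (a b c d : ℚ) : Wt n a b + Wt n c d = Wt n (a+c) (b+d) := by
  rw [Wt, Wt, Wt, ← Finset.sum_add_distrib]
  refine Finset.sum_congr rfl fun π _ => ?_
  rw [← add_smul]
  congr 1
  split <;> rfl

lemma Wt_signed (n : ℕ) : Wt n 1 (-1) = (X 0 - X 1 : MvPolynomial (Fin 2) ℚ) ^ n := by
  induction n with
  | zero =>
    have h1 : ∀ π : Equiv.Perm (Fin 1), π = 1 := fun π => Equiv.ext fun i => Subsingleton.elim _ _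
    rw [Wt, show (univ : Finset (Equiv.Perm (Fin 1))) = {1} from
      Finset.eq_singleton_iff_unique_mem.2 ⟨mem_univ _, fun x _ => h1 x⟩,
      Finset.sum_singleton]
    have he : excA (1 : Equiv.Perm (Fin 1)) = 0 := by simp [excA]
    simp [he, trm]
  | succ n ih =>
    rw [Wt_succ, show ((-1 : ℚ)) = -(1:ℚ) from rfl,
      show Wt n (-(1:ℚ)) 1 = Wt n (-(1:ℚ)) (-(-1:ℚ)) from by norm_num, Wt_neg, ih,
      Dop_neg, Dop_sub_pow, pow_succ]
    ring

lemma term_eq {n : ℕ} (π : Equiv.Perm (Fin (n+1))) :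
    (X 1 : MvPolynomial (Fin 2) ℚ) ^ excA π * X 0 ^ (nexcA π - 1) = trm n (excA π) := by
  rw [trm, nexcA]
  congr 2
  omega

lemma AexcP_eq (n : ℕ) : AexcP (n+1) = Wt n 1 0 := by
  rw [AexcP, Finset.sum_filter, Wt]
  refine Finset.sum_congr rfl fun π _ => ?_
  by_cases h : Equiv.Perm.sign π = 1
  · rw [if_pos ((even_invA_iff π).2 h), if_pos h, one_smul, term_eq]
  · rw [if_neg (fun he => h ((even_invA_iff π).1 he)), if_neg h, zero_smul]

lemma AexcM_eq (n : ℕ) : AexcM (n+1) = Wt n 0 1 := by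
  rw [AexcM, Finset.sum_filter, Wt]
  refine Finset.sum_congr rfl fun π _ => ?_
  by_cases h : Equiv.Perm.sign π = 1
  · rw [if_pos h, if_neg (fun he => he ((even_invA_iff π).2 h)), zero_smul]
  · rw [if_neg h, if_pos (fun he => h ((even_invA_iff π).1 he)), one_smul, term_eq]

lemma Aexc_eq (n : ℕ) : Aexc (n+1) = Wt n 1 1 := by
  rw [Aexc, Wt]
  refine Finset.sum_congr rfl fun π _ => ?_
  rw [term_eq]
  split <;> simp

lemma Dop_key (m : ℕ) :
    X 0 * X 1 * Dop (Wt m 1 0) = X 0 * X 1 * Dop (Wt m 0 1) := by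
  have h : Wt m 1 0 = Wt m 1 (-1) + Wt m 0 1 := by
    rw [Wt_add]; norm_num
  rw [h, Dop_add, Wt_signed, Dop_sub_pow, zero_add]

end Aux

theorem stmt4 (n : ℕ) (hn : 2 ≤ n) :
    AexcP n = X 0 * AexcP (n - 1) + X 1 * AexcM (n - 1) +
      (1 / 2 : ℚ) • (X 0 * X 1 * Dop (Aexc (n - 1))) := by
  obtain ⟨m, rfl⟩ : ∃ m, n = m + 2 := ⟨n - 2, by omega⟩
  have h1 : m + 2 - 1 = m + 1 := rfl
  rw [h1, AexcP_eq (m+1), AexcP_eq m, AexcM_eq m, Aexc_eq m, Wt_succ]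
  have h2 : Wt m 1 1 = Wt m 1 0 + Wt m 0 1 := by rw [Wt_add]; norm_num
  rw [h2, Dop_add, mul_add, Dop_key, smul_add, ← add_smul]
  norm_num
  ring
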